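/- Let E be a real Banach space and let F, G ⊆ E* be linear subspaces of the continuous dual that are both weak-star closed (closed in the topology of pointwise convergence on E), such that F is finite-dimensional and E* = F ⊕ G. Then E = F₀ ⊕ G₀, where F₀ and G₀ denote the pre-annihilators of F and G in E; that is, F₀ ∩ G₀ = {0} and F₀ + G₀ = E. -/

import Mathlib

open NormedSpace

noncomputable section

/-- The annihilator of a subspace `W ⊆ E` in the continuous dual `E*`. -/
def ann {E : Type*} [NormedAddCommGroup E] [NormedSpace ℝ E]
    (W : Submodule ℝ E) : Submodule ℝ (StrongDual ℝ E) where
  carrier := {ℓ | ∀ w ∈ W, ℓ w = 0}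
  add_mem' := by
    intro a b ha hb w hw
    simp [ha w hw, hb w hw]
  zero_mem' := by
    intro w hw
    simp
  smul_mem' := by
    intro c ℓ hℓ w hw
    simp [hℓ w hw]

/-- The pre-annihilator of a subspace `H ⊆ E*` in `E`. -/
def preAnn {E : Type*} [NormedAddCommGroup E] [NormedSpace ℝ E]
    (H : Submodule ℝ (StrongDual ℝ E)) : Submodule ℝ E where
  carrier := {x | ∀ ℓ ∈ H, ℓ x = 0}
  add_mem' := by
    intro a b ha hb ℓ hℓ
    simp [ha ℓ hℓ, hb ℓ hℓ]
  zero_mem' := by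
    intro ℓ hℓ
    simp
  smul_mem' := by
    intro c x hx ℓ hℓ
    simp [hx ℓ hℓ]

/-- A subspace of the continuous dual is weak-star closed if its image in `WeakDual ℝ E`
(the dual with the topology of pointwise convergence on `E`) is closed. -/
def IsWeakStarClosed {E : Type*} [NormedAddCommGroup E] [NormedSpace ℝ E]
    (H : Submodule ℝ (StrongDual ℝ E)) : Prop :=
  IsClosed (StrongDual.toWeakDual '' (H : Set (StrongDual ℝ E)))

/-- The relative projection constant of a subspace `W` of a normed space `Y`:
the infimum of the operator norms of continuous linear projections of `Y` onto `W`. -/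
def relProjConst {Y : Type*} [NormedAddCommGroup Y] [NormedSpace ℝ Y]
    (W : Submodule ℝ Y) : ℝ :=
  sInf {c | ∃ P : Y →L[ℝ] Y, P.comp P = P ∧ LinearMap.range (P : Y →ₗ[ℝ] Y) = W ∧ ‖P‖ = c}

end

section AuxLemmas

noncomputable section

variable {E : Type*} [NormedAddCommGroup E] [NormedSpace ℝ E]

instance : LocallyConvexSpace ℝ (WeakDual ℝ E) :=
  WeakBilin.locallyConvexSpace (B := topDualPairing ℝ E)

/-- Every continuous linear functional on the weak-star dual is evaluation at a point. -/
lemma weakDual_functional_exists_eval (f : WeakDual ℝ E →L[ℝ] ℝ) :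
    ∃ x : E, ∀ ℓ : StrongDual ℝ E, f (StrongDual.toWeakDual ℓ) = ℓ x := by
  set B := topDualPairing ℝ E
  have hmem : f ⁻¹' (Metric.ball (0 : ℝ) 1) ∈ nhds (0 : WeakDual ℝ E) := by
    have : f 0 = 0 := map_zero f
    exact f.continuous.continuousAt.preimage_mem_nhds (by simp [this, Metric.ball_mem_nhds])
  obtain ⟨U, hU, hsub⟩ := (LinearMap.hasBasis_weakBilin B).mem_iff.mp hmem
  obtain ⟨s, r, hr, rfl⟩ := (SeminormFamily.basisSets_iff _).mp hU
  -- evaluation maps as linear functionals on the weak dual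
  set L : {x : E // x ∈ s} → (WeakDual ℝ E →ₗ[ℝ] ℝ) := fun x => B.flip (x : E) with hL
  have hker : ⨅ i, LinearMap.ker (L i) ≤ LinearMap.ker (f : WeakDual ℝ E →ₗ[ℝ] ℝ) := by
    intro ℓ hℓ
    simp only [Submodule.mem_iInf, LinearMap.mem_ker] at hℓ ⊢
    show f ℓ = 0
    have hzero : ∀ c : ℝ, |c| * |f ℓ| < 1 := by
      intro c
      have hball : (c • ℓ) ∈ Seminorm.ball (s.sup (B.toSeminormFamily)) 0 r := by
        refine (Seminorm.mem_ball_zero _).2 ?_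
        refine Seminorm.finset_sup_apply_lt hr fun i hi => ?_
        have h0 : ℓ i = 0 := hℓ ⟨i, hi⟩
        change ‖B (c • ℓ) i‖ < r
        show ‖c * ℓ i‖ < r
        rw [h0, mul_zero, norm_zero]
        exact hr
      have : f (c • ℓ) ∈ Metric.ball (0:ℝ) 1 := hsub hball
      simpa [Real.dist_eq, map_smul, smul_eq_mul, abs_mul] using this
    by_contra h
    have h2 := hzero (|f ℓ|)⁻¹
    rw [abs_inv, abs_abs, inv_mul_cancel₀ (abs_ne_zero.2 h)] at h2
    norm_num at h2
  have hspan := mem_span_of_iInf_ker_le_ker (L := L) (K := (f : WeakDual ℝ E →ₗ[ℝ] ℝ)) hker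
  obtain ⟨c, hc⟩ := (Submodule.mem_span_range_iff_exists_fun ℝ).1 hspan
  refine ⟨∑ i, c i • (i : E), fun ℓ => ?_⟩
  have h1 := congrArg (fun (g : WeakDual ℝ E →ₗ[ℝ] ℝ) => g (StrongDual.toWeakDual ℓ)) hc
  simp only [LinearMap.coe_sum, Finset.sum_apply, LinearMap.smul_apply, smul_eq_mul] at h1
  show (f : WeakDual ℝ E →ₗ[ℝ] ℝ) (StrongDual.toWeakDual ℓ) = ℓ (∑ i, c i • (i : E))
  rw [← h1, map_sum]
  simp only [L, smul_eq_mul, map_smul]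
  exact Finset.sum_congr rfl fun x _ => rfl

/-- weak-star bipolar: a weak-star closed subspace contains every functional
vanishing on its pre-annihilator. -/
lemma mem_of_weakStarClosed {H : Submodule ℝ (StrongDual ℝ E)} (hH : IsWeakStarClosed H)
    {ℓ : StrongDual ℝ E} (hℓ : ∀ x ∈ preAnn H, ℓ x = 0) : ℓ ∈ H := by
  by_contra hnot
  set H' : Submodule ℝ (WeakDual ℝ E) :=
    H.map ((StrongDual.toWeakDual : StrongDual ℝ E ≃ₗ[ℝ] WeakDual ℝ E) : StrongDual ℝ E →ₗ[ℝ] WeakDual ℝ E) with hH'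
  have hcoe : (H' : Set (WeakDual ℝ E)) = StrongDual.toWeakDual '' (H : Set (StrongDual ℝ E)) := by
    simp [hH', Submodule.map_coe]
  have hclosed : IsClosed (H' : Set (WeakDual ℝ E)) := by rw [hcoe]; exact hH
  have hnotmem : StrongDual.toWeakDual ℓ ∉ (H' : Set (WeakDual ℝ E)) := by
    rw [hcoe]
    rintro ⟨g, hg, hgeq⟩
    exact hnot (by rwa [← (StrongDual.toWeakDual).injective hgeq])
  obtain ⟨f, u, hfu, hux⟩ :=
    geometric_hahn_banach_closed_point (Submodule.convex H') hclosed hnotmem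
  -- f vanishes on H'
  have hf0 : ∀ a ∈ H', f a = 0 := by
    intro a ha
    by_contra hfa
    have h1 : ∀ c : ℝ, c * f a < u := fun c => by
      have := hfu (c • a) (H'.smul_mem c ha)
      simpa [map_smul, smul_eq_mul] using this
    have := h1 ((u + 1) / f a)
    rw [div_mul_cancel₀ _ hfa] at this
    linarith
  have hu0 : 0 < u := by
    have := hfu 0 H'.zero_mem
    simpa using this
  obtain ⟨x, hx⟩ := weakDual_functional_exists_eval f
  have hxpre : x ∈ preAnn H := by
    intro g hg
    rw [← hx g]
    exact hf0 _ ⟨g, hg, rfl⟩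
  have : ℓ x = 0 := hℓ x hxpre
  rw [← hx ℓ] at this
  linarith [hux, this]

end

end AuxLemmas

set_option synthInstance.maxHeartbeats 1000000 in
set_option maxHeartbeats 1000000 in
/-- If `F, G ⊆ E*` are weak-star closed subspaces with `F` finite-dimensional
and `E* = F ⊕ G`, then `E = F₀ ⊕ G₀`. -/
theorem preAnn_decomposition (E : Type*) [NormedAddCommGroup E] [NormedSpace ℝ E]
    [CompleteSpace E] (F G : Submodule ℝ (StrongDual ℝ E))
    (hFc : IsWeakStarClosed F) (hGc : IsWeakStarClosed G)
    (hFfd : FiniteDimensional ℝ F)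
    (hinf : F ⊓ G = ⊥) (hsup : F ⊔ G = ⊤) :
    preAnn F ⊓ preAnn G = ⊥ ∧ preAnn F ⊔ preAnn G = ⊤ := by
  constructor
  · -- intersection is trivial
    rw [Submodule.eq_bot_iff]
    intro x hx
    obtain ⟨hxF, hxG⟩ := Submodule.mem_inf.mp hx
    refine NormedSpace.eq_zero_of_forall_dual_eq_zero ℝ fun ℓ => ?_
    have hℓ : ℓ ∈ F ⊔ G := hsup ▸ Submodule.mem_top
    obtain ⟨g, hg, h, hh, rfl⟩ := Submodule.mem_sup.mp hℓ
    have h1 : g x = 0 := hxF g hg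
    have h2 : h x = 0 := hxG h hh
    simp [h1, h2]
  · -- sum is everything
    set n := Module.finrank ℝ F with hn
    have b : Module.Basis (Fin n) ℝ F := (by haveI := hFfd; haveI : Module.Free ℝ F := Module.Free.of_divisionRing ℝ F; exact Module.finBasis ℝ F)
    -- the evaluation map on the pre-annihilator of G
    set φ : (preAnn G) →ₗ[ℝ] (Fin n → ℝ) :=
      LinearMap.pi (fun i => ((b i : StrongDual ℝ E) : E →ₗ[ℝ] ℝ).comp (preAnn G).subtype) with hφ
    have hφ_apply : ∀ (v : preAnn G) (i : Fin n), φ v i = (b i : StrongDual ℝ E) (v : E) :=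
      fun v i => rfl
    -- φ is surjective
    have hsurj : Function.Surjective φ := by
      rw [← LinearMap.range_eq_top]
      by_contra hne
      obtain ⟨K, hK0, hKbot⟩ :=
        Submodule.exists_dual_map_eq_bot_of_lt_top (lt_top_iff_ne_top.mpr hne) inferInstance
      have hKker : ∀ v : preAnn G, K (φ v) = 0 := by
        intro v
        have : K (φ v) ∈ (LinearMap.range φ).map K :=
          Submodule.mem_map_of_mem (LinearMap.mem_range_self φ v)
        rwa [hKbot, Submodule.mem_bot] at this
      have hsingle : ∀ i : Fin n, (fun j => if i = j then (1:ℝ) else 0) = Pi.single i 1 := by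
        intro i; ext j; simp [Pi.single_apply, eq_comm]
      set c : Fin n → ℝ := fun i => K (Pi.single i 1) with hc
      set ℓF : F := ∑ i, c i • b i with hℓF
      have hℓF_apply : ∀ y : E, (ℓF : StrongDual ℝ E) y = ∑ i, c i * (b i : StrongDual ℝ E) y := by
        intro y
        rw [hℓF]
        simp [Submodule.coe_sum, smul_eq_mul]
      have hℓFG : (ℓF : StrongDual ℝ E) ∈ G := by
        refine mem_of_weakStarClosed hGc fun x hx => ?_
        rw [hℓF_apply]
        have := hKker ⟨x, hx⟩
        rw [LinearMap.pi_apply_eq_sum_univ K (φ ⟨x, hx⟩)] at this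
        rw [← this]
        refine Finset.sum_congr rfl fun i _ => ?_
        rw [hφ_apply, hsingle i]
        simp [hc, smul_eq_mul, mul_comm]
      have hℓF0 : ℓF = 0 := by
        have : (ℓF : StrongDual ℝ E) ∈ F ⊓ G := Submodule.mem_inf.mpr ⟨ℓF.2, hℓFG⟩
        rw [hinf, Submodule.mem_bot] at this
        exact Subtype.ext this
      have hc0 : ∀ i, c i = 0 := by
        have hli := b.linearIndependent
        rw [Fintype.linearIndependent_iffₛ] at hli
        exact fun i => hli c 0 (by simp only [Pi.zero_apply, zero_smul, Finset.sum_const_zero]; rw [← hℓF]; exact hℓF0) i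
      refine hK0 (LinearMap.ext fun y => ?_)
      rw [LinearMap.pi_apply_eq_sum_univ K y]
      refine Finset.sum_eq_zero fun i _ => ?_
      rw [hsingle i]
      have := hc0 i
      rw [hc] at this
      simp [this]
    -- now finish
    rw [Submodule.eq_top_iff']
    intro x
    obtain ⟨v, hv⟩ := hsurj (fun i => (b i : StrongDual ℝ E) x)
    have hxv : x - (v : E) ∈ preAnn F := by
      intro ℓ hℓ
      have hrepr : ∑ i, b.repr ⟨ℓ, hℓ⟩ i • b i = (⟨ℓ, hℓ⟩ : F) := b.sum_repr ⟨ℓ, hℓ⟩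
      have : ℓ (x - v) = ∑ i, b.repr ⟨ℓ, hℓ⟩ i * (b i : StrongDual ℝ E) (x - (v : E)) := by
        conv_lhs => rw [show ℓ = ((⟨ℓ, hℓ⟩ : F) : StrongDual ℝ E) from rfl, ← hrepr]
        simp [Submodule.coe_sum, smul_eq_mul]
        have h : ℓ (x - (v : E)) = ((∑ i, b.repr ⟨ℓ, hℓ⟩ i • b i : F) : StrongDual ℝ E) (x - (v : E)) := by
          rw [hrepr]
        rw [← map_sub, h, Submodule.coe_sum, ContinuousLinearMap.sum_apply]
        simp only [Submodule.coe_smul, ContinuousLinearMap.smul_apply, smul_eq_mul, map_sub, mul_sub]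
      rw [this]
      refine Finset.sum_eq_zero fun i _ => ?_
      have hbi : (b i : StrongDual ℝ E) (v : E) = (b i : StrongDual ℝ E) x := by
        have := congrFun hv i
        rw [hφ_apply] at this
        exact this
      rw [map_sub, hbi, sub_self, mul_zero]
    have hvG : (v : E) ∈ preAnn G := v.2
    have : x = (x - (v : E)) + (v : E) := by abel
    rw [this]
    exact Submodule.add_mem _ (Submodule.mem_sup_left hxv) (Submodule.mem_sup_right hvG)
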